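/- For every k ≥ 1 and every universal co-Büchi k-register automaton A over the infinite data-domain D: the product automaton A_B@V_k has a rejected Boolean word (a word over 2^(P ∪ G_i ∪ G_o ∪ Asgn) on which some run of A_B@V_k visits the co-Büchi set infinitely often) if and only if A has a rejected data-word (a word over 2^P × D × D on which some data-path of A visits F infinitely often). -/

import Mathlib

/-- A register word automaton over Boolean signals `P`, data-domain `D`, states `Q`,
and registers indexed by `R` (for a `k`-register automaton, `R = Fin k`).
The transition function reads a Boolean letter, an input-guard and an output-guard
(comparisons of the data-values of `i` resp. `o` with the registers) and yields
a set of (assignment, successor-state) pairs. -/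
structure RegAutomaton (P D Q R : Type) where
  d0 : D
  q0 : Q
  F : Set Q
  tr : Q → (P → Bool) → (R → Bool) → (R → Bool) → Set ((R → Bool) × Q)

/-- A data-path of a register automaton on the letter sequence `(l j, di j, dout j)`. -/
structure DataPath {P D Q R : Type} [DecidableEq D] (A : RegAutomaton P D Q R)
    (l : ℕ → P → Bool) (di dout : ℕ → D) where
  st : ℕ → Q
  regs : ℕ → R → D
  asgn : ℕ → R → Bool
  init_st : st 0 = A.q0
  init_regs : ∀ n, regs 0 n = A.d0
  step : ∀ j, (asgn j, st (j + 1)) ∈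
    A.tr (st j) (l j) (fun n => decide (di j = regs j n)) (fun n => decide (dout j = regs j n))
  update : ∀ j n, regs (j + 1) n = if asgn j n then di j else regs j n

/-- The transition relation of the verifier `V_k`: its states are partitions of the
register set (modelled as setoids); the guard letter must respect the current partition,
and the successor partition is determined by the assignment letter. -/
def VTrans {R : Type} (pa pa' : Setoid R) (gi go a : R → Bool) : Prop :=
  (∀ m n : R, pa.r m n → gi m = gi n ∧ go m = go n) ∧
  (∀ m n : R, ¬ pa.r m n → ¬(gi m = true ∧ gi n = true) ∧ ¬(go m = true ∧ go n = true)) ∧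
  (∀ m n : R, pa'.r m n ↔
    ((a m = true ∧ a n = true) ∨ (a m = false ∧ a n = true ∧ gi m = true) ∨
     (a m = true ∧ a n = false ∧ gi n = true) ∨ (a m = false ∧ a n = false ∧ pa.r m n)))

/-- A Boolean path of the product automaton `A_B @ V_k`: a path of the Boolean
associate of `A` together with the (deterministic) partition component of the
verifier, starting in the one-block partition `⊤`. -/
structure BoolPathV {P D Q R : Type} (A : RegAutomaton P D Q R) where
  st : ℕ → Q
  part : ℕ → Setoid R
  lP : ℕ → P → Bool
  gi : ℕ → R → Bool
  go : ℕ → R → Bool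
  asgn : ℕ → R → Bool
  init_st : st 0 = A.q0
  init_part : part 0 = ⊤
  stepA : ∀ j, (asgn j, st (j + 1)) ∈ A.tr (st j) (lP j) (gi j) (go j)
  stepV : ∀ j, VTrans (part j) (part (j + 1)) (gi j) (go j) (asgn j)

/-- A data-path of `A` corresponds to a Boolean path of `A_B @ V_k` iff, projecting away
the partition component, they visit the same states, carry the same `2^P`-letters, and at
every step the guard and assignment signals encode the guards and assignment of the
data-path. -/
def CorrespondsV {P D Q R : Type} [DecidableEq D] {A : RegAutomaton P D Q R}
    {l : ℕ → P → Bool} {di dout : ℕ → D}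
    (dp : DataPath A l di dout) (bp : BoolPathV A) : Prop :=
  (∀ j, bp.st j = dp.st j) ∧ (∀ j, bp.lP j = l j) ∧
  (∀ j, bp.gi j = fun n => decide (di j = dp.regs j n)) ∧
  (∀ j, bp.go j = fun n => decide (dout j = dp.regs j n)) ∧
  (∀ j, bp.asgn j = dp.asgn j)

/-- for every `k ≥ 1` and universal co-Büchi `k`-register automaton `A`:
`A_B @ V_k` has a rejected Boolean word (some run — i.e. some Boolean path, which never
falls out of the verifier — visits the co-Büchi set `{(q,π) : q ∈ F}` infinitely often)
iff `A` has a rejected data-word (some data-path on it visits `F` infinitely often). -/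
noncomputable def pickD {D : Type} [Infinite D] [DecidableEq D] {k : ℕ}
    (g : Fin k → Bool) (regs : Fin k → D) : D :=
  if h : ∃ n, g n = true then regs h.choose
  else (Infinite.exists_notMem_finset (Finset.univ.image regs)).choose

lemma pickD_spec {D : Type} [Infinite D] [DecidableEq D] {k : ℕ}
    (g : Fin k → Bool) (regs : Fin k → D) (pa : Setoid (Fin k))
    (hinv : ∀ m n, regs m = regs n ↔ pa.r m n)
    (h1 : ∀ m n, pa.r m n → g m = g n)
    (h2 : ∀ m n, ¬ pa.r m n → ¬(g m = true ∧ g n = true)) :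
    ∀ n, (pickD g regs = regs n ↔ g n = true) := by
  intro n
  unfold pickD
  split
  · next h =>
    have hg0 := h.choose_spec
    constructor
    · intro he
      have hr := (hinv _ _).mp he
      have := h1 _ _ hr
      rw [← this]; exact hg0
    · intro hn
      by_contra hne
      have : ¬ pa.r h.choose n := fun hr => hne ((hinv _ _).mpr hr)
      exact (h2 _ _ this) ⟨hg0, hn⟩
  · next h =>
    have hf := (Infinite.exists_notMem_finset (Finset.univ.image regs)).choose_spec
    constructor
    · intro he
      rw [he] at hf
      exact absurd (Finset.mem_image_of_mem regs (Finset.mem_univ n)) hf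
    · intro hn; exact absurd ⟨n, hn⟩ h

noncomputable def regsOf {P D Q : Type} [Infinite D] [DecidableEq D] {k : ℕ}
    {A : RegAutomaton P D Q (Fin k)} (bp : BoolPathV A) : ℕ → Fin k → D
  | 0 => fun _ => A.d0
  | j+1 => fun n => if bp.asgn j n then pickD (bp.gi j) (regsOf bp j) else regsOf bp j n

lemma regsOf_inv {P D Q : Type} [Infinite D] [DecidableEq D] {k : ℕ}
    {A : RegAutomaton P D Q (Fin k)} (bp : BoolPathV A) :
    ∀ j m n, regsOf bp j m = regsOf bp j n ↔ (bp.part j).r m n := by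
  intro j
  induction j with
  | zero =>
    intro m n
    rw [bp.init_part]
    exact ⟨fun _ => trivial, fun _ => rfl⟩
  | succ j ih =>
    intro m n
    obtain ⟨h1, h2, h3⟩ := bp.stepV j
    have key := pickD_spec (bp.gi j) (regsOf bp j) (bp.part j) ih
      (fun m n h => (h1 m n h).1) (fun m n h => (h2 m n h).1)
    rw [h3]
    show (if bp.asgn j m then pickD (bp.gi j) (regsOf bp j) else regsOf bp j m) =
      (if bp.asgn j n then pickD (bp.gi j) (regsOf bp j) else regsOf bp j n) ↔ _
    rcases hm : bp.asgn j m <;> rcases hn : bp.asgn j n <;> simp [hm, hn]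
    · exact ih m n
    · rw [eq_comm]; exact key m
    · exact key n
theorem stmt5 (D : Type) [Infinite D] [DecidableEq D] (P Q : Type) [Finite P] [Finite Q]
    (k : ℕ) (hk : 1 ≤ k) (A : RegAutomaton P D Q (Fin k)) :
    (∃ bp : BoolPathV A, ∀ N, ∃ j, N ≤ j ∧ bp.st j ∈ A.F) ↔
    (∃ (l : ℕ → P → Bool) (di dout : ℕ → D) (dp : DataPath A l di dout),
      ∀ N, ∃ j, N ≤ j ∧ dp.st j ∈ A.F) := by
  constructor
  · rintro ⟨bp, hacc⟩
    have keyi : ∀ j n, pickD (bp.gi j) (regsOf bp j) = regsOf bp j n ↔ bp.gi j n = true := by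
      intro j
      obtain ⟨h1, h2, h3⟩ := bp.stepV j
      exact pickD_spec _ _ (bp.part j) (regsOf_inv bp j)
        (fun m n h => (h1 m n h).1) (fun m n h => (h2 m n h).1)
    have keyo : ∀ j n, pickD (bp.go j) (regsOf bp j) = regsOf bp j n ↔ bp.go j n = true := by
      intro j
      obtain ⟨h1, h2, h3⟩ := bp.stepV j
      exact pickD_spec _ _ (bp.part j) (regsOf_inv bp j)
        (fun m n h => (h1 m n h).2) (fun m n h => (h2 m n h).2)
    refine ⟨bp.lP, fun j => pickD (bp.gi j) (regsOf bp j),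
      fun j => pickD (bp.go j) (regsOf bp j),
      ⟨bp.st, regsOf bp, bp.asgn, bp.init_st, fun n => rfl, ?_, fun j n => rfl⟩, hacc⟩
    intro j
    have hgi : (fun n => decide (pickD (bp.gi j) (regsOf bp j) = regsOf bp j n)) = bp.gi j := by
      funext n; rw [Bool.eq_iff_iff, decide_eq_true_iff]; exact keyi j n
    have hgo : (fun n => decide (pickD (bp.go j) (regsOf bp j) = regsOf bp j n)) = bp.go j := by
      funext n; rw [Bool.eq_iff_iff, decide_eq_true_iff]; exact keyo j n
    show (bp.asgn j, bp.st (j+1)) ∈ A.tr (bp.st j) (bp.lP j)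
      (fun n => decide (pickD (bp.gi j) (regsOf bp j) = regsOf bp j n))
      (fun n => decide (pickD (bp.go j) (regsOf bp j) = regsOf bp j n))
    rw [hgi, hgo]
    exact bp.stepA j
  · rintro ⟨l, di, dout, dp, hacc⟩
    refine ⟨⟨dp.st, fun j => Setoid.ker (dp.regs j), l,
      fun j n => decide (di j = dp.regs j n),
      fun j n => decide (dout j = dp.regs j n), dp.asgn, dp.init_st, ?_, dp.step, ?_⟩, hacc⟩
    · apply Setoid.ext; intro a b
      constructor
      · intro _; trivial
      · intro _
        show dp.regs 0 a = dp.regs 0 b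
        rw [dp.init_regs, dp.init_regs]
    · intro j
      refine ⟨?_, ?_, ?_⟩
      · intro m n h
        have he : dp.regs j m = dp.regs j n := h
        beta_reduce
        rw [he]
        exact ⟨rfl, rfl⟩
      · intro m n h
        have hne : dp.regs j m ≠ dp.regs j n := h
        constructor <;>
          · rintro ⟨ha, hb⟩
            simp only [decide_eq_true_iff] at ha hb
            exact hne (ha ▸ hb ▸ rfl)
      · intro m n
        show dp.regs (j+1) m = dp.regs (j+1) n ↔ _
        rw [dp.update, dp.update]
        rcases hm : dp.asgn j m <;> rcases hn : dp.asgn j n <;>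
          simp [hm, hn, decide_eq_true_iff]
        · exact eq_comm
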